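/- arXiv:0806.2696 — 4 statements merged into one kernel-verified Lean document; each statement's English description precedes it below -/
import Mathlib

section
/- Let V be a 3-dimensional complex vector space, g a nondegenerate symmetric bilinear form on V, and q a quadratic form on V. If q(ξ) = 0 for every null vector ξ (i.e., every ξ ∈ V with g(ξ,ξ) = 0), then there exists a constant c ∈ ℂ such that q(ξ) = c·g(ξ,ξ) for all ξ ∈ V. -/
/-- A quadratic form on a 3-dimensional complex vector space that vanishes
on the null cone of a nondegenerate symmetric bilinear form `g` is a constant multiple
of `g(ξ,ξ)`. -/
theorem quadratic_form_vanishing_on_null_cone_is_multiple_of_metric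
    (V : Type*) [AddCommGroup V] [Module ℂ V] [FiniteDimensional ℂ V]
    (hdim : Module.finrank ℂ V = 3)
    (g : V →ₗ[ℂ] V →ₗ[ℂ] ℂ)
    (hsymm : ∀ x y : V, g x y = g y x)
    (hnondeg : ∀ x : V, (∀ y : V, g x y = 0) → x = 0)
    (q : QuadraticForm ℂ V)
    (hq : ∀ ξ : V, g ξ ξ = 0 → q ξ = 0) :
    ∃ c : ℂ, ∀ ξ : V, q ξ = c * g ξ ξ := by
  haveI : Invertible (2 : ℂ) := invertibleOfNonzero two_ne_zero
  have hg : g.IsSymm := ⟨fun x y => hsymm x y⟩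
  obtain ⟨v0, hv0⟩ := LinearMap.BilinForm.exists_orthogonal_basis hg
  let v : Module.Basis (Fin 3) ℂ V := v0.reindex (finCongr hdim)
  have hvorth : ∀ i j : Fin 3, i ≠ j → g (v i) (v j) = 0 := by
    intro i j hij
    have : ((finCongr hdim).symm i) ≠ ((finCongr hdim).symm j) := by
      simp [Equiv.symm_apply_eq]
      intro h; exact hij h
    simpa [v, Module.Basis.reindex_apply] using hv0 this
  have hvdiag : ∀ i : Fin 3, g (v i) (v i) ≠ 0 := by
    intro i h
    have hz : g (v i) = 0 := by
      apply v.ext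
      intro j
      by_cases hij : i = j
      · subst hij; simpa using h
      · simpa using hvorth i j hij
    have : v i = 0 := hnondeg _ (fun y => by rw [hz]; rfl)
    exact v.ne_zero i this
  -- normalize the basis
  have hsq : ∀ i : Fin 3, ∃ s : ℂ, s ^ 2 = (g (v i) (v i))⁻¹ :=
    fun i => IsAlgClosed.exists_pow_nat_eq _ (by norm_num)
  choose s hs using hsq
  have hsne : ∀ i, s i ≠ 0 := by
    intro i h
    have := hs i
    rw [h] at this
    simp at this
    exact hvdiag i this.symm
  let u : Fin 3 → ℂˣ := fun i => Units.mk0 (s i) (hsne i)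
  let w : Module.Basis (Fin 3) ℂ V := v.unitsSMul u
  have hw : ∀ i, w i = s i • v i := fun i => Module.Basis.unitsSMul_apply i
  have hworth : ∀ i j : Fin 3, i ≠ j → g (w i) (w j) = 0 := by
    intro i j hij
    rw [hw, hw]
    simp [hvorth i j hij]
  have hwdiag : ∀ i : Fin 3, g (w i) (w i) = 1 := by
    intro i
    rw [hw]
    simp only [map_smul, LinearMap.smul_apply, smul_eq_mul]
    rw [← mul_assoc, ← sq, hs i]
    exact inv_mul_cancel₀ (hvdiag i)
  -- the associated bilinear form
  set B : LinearMap.BilinForm ℂ V := QuadraticMap.associatedHom ℂ q with hBdef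
  have hBq : ∀ x : V, B x x = q x := fun x => q.associated_eq_self_apply ℂ x
  have hBsymm : ∀ x y : V, B x y = B y x := by
    intro x y
    exact QuadraticMap.associated_isSymm ℂ q x y
  -- key computations on basis vectors
  have key : ∀ i j : Fin 3, i ≠ j → B (w i) (w j) = 0 ∧ q (w i) = q (w j) := by
    intro i j hij
    have hnull : ∀ t : ℂ, t ^ 2 = -1 → g (w i + t • w j) (w i + t • w j) = 0 := by
      intro t ht
      simp only [map_add, map_smul, LinearMap.add_apply, LinearMap.smul_apply, smul_eq_mul]
      rw [hwdiag i, hwdiag j, hworth i j hij, hworth j i (Ne.symm hij)]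
      linear_combination ht
    have hexp : ∀ t : ℂ, B (w i + t • w j) (w i + t • w j)
        = q (w i) + t ^ 2 * q (w j) + 2 * t * B (w i) (w j) := by
      intro t
      simp only [map_add, map_smul, LinearMap.add_apply, LinearMap.smul_apply, smul_eq_mul]
      rw [hBq, hBq, hBsymm (w j) (w i)]
      ring
    have h1 : q (w i) + (-1 : ℂ) * q (w j) + 2 * Complex.I * B (w i) (w j) = 0 := by
      have := hq _ (hnull Complex.I (by simp [Complex.I_sq]))
      rw [← hBq] at this
      rw [← Complex.I_sq]
      rw [hexp Complex.I] at this
      exact this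
    have h2 : q (w i) + (-1 : ℂ) * q (w j) + 2 * (-Complex.I) * B (w i) (w j) = 0 := by
      have := hq _ (hnull (-Complex.I) (by simp [Complex.I_sq]))
      rw [← hBq] at this
      rw [hexp (-Complex.I)] at this
      rw [show (-Complex.I) ^ 2 = (-1 : ℂ) by simp [Complex.I_sq]] at this
      exact this
    constructor
    · have h3 : 4 * Complex.I * B (w i) (w j) = 0 := by linear_combination h1 - h2
      have h4 : (4 : ℂ) * Complex.I ≠ 0 := by
        simp [Complex.I_ne_zero]
      exact (mul_eq_zero.mp h3).resolve_left h4
    · linear_combination (h1 + h2) / 2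
  set c : ℂ := q (w 0) with hc
  have hqw : ∀ i : Fin 3, q (w i) = c := by
    intro i
    by_cases h : i = 0
    · rw [h]
    · exact (key i 0 h).2
  have hBg : ∀ i j : Fin 3, B (w i) (w j) = (c • g) (w i) (w j) := by
    intro i j
    by_cases h : i = j
    · subst h
      rw [hBq, hqw i]
      simp [hwdiag i]
    · rw [(key i j h).1]
      simp [hworth i j h]
  have hBgeq : B = c • g := LinearMap.ext_basis w w hBg
  refine ⟨c, fun ξ => ?_⟩
  rw [← hBq ξ, hBgeq]
  simp
end

section
/- Let π : ℂ → ℝ³ be given by π(w) = ( 2·Re w/(1+|w|²), 2·Im w/(1+|w|²), (1−|w|²)/(1+|w|²) ). Let λ ∈ ℂ and z ∈ ℂ with |z| ≤ 1, 1 − conj(λ)·z ≠ 0, conj(λ)·z + 1 ≠ 0 and z ≠ λ. Set η₁ = (z + λ)/(1 − conj(λ)·z) and η₂ = (z − λ)/(conj(λ)·z + 1), and let S = π(η₁) + π(1/conj(η₂)) ∈ ℝ³. Then 2(Re λ)·S₁ + 2(Im λ)·S₂ + (1 − |λ|²)·S₃ = 0. (This is the key computation showing that for each point (η₁,η₂)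 of the standard disk D_{(λ,0)}, the great circle associated with λ is the set of points of S² equidistant from π(η₁) and π(τ(η₂)).) -/
/-- The inverse stereographic projection ℂ → S² ⊂ ℝ³. -/
noncomputable def stereo (w : ℂ) : Fin 3 → ℝ :=
  ![2 * w.re / (1 + Complex.normSq w),
    2 * w.im / (1 + Complex.normSq w),
    (1 - Complex.normSq w) / (1 + Complex.normSq w)]

lemma stereo_div (a b : ℂ) (hb : b ≠ 0) :
    stereo (a / b) =
      ![2 * (a * (starRingEnd ℂ) b).re / (Complex.normSq b + Complex.normSq a),
        2 * (a * (starRingEnd ℂ) b).im / (Complex.normSq b + Complex.normSq a),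
        (Complex.normSq b - Complex.normSq a) / (Complex.normSq b + Complex.normSq a)] := by
  have hnb : Complex.normSq b ≠ 0 := (Complex.normSq_pos.2 hb).ne'
  have hpos : (0:ℝ) < Complex.normSq b + Complex.normSq a :=
    add_pos_of_pos_of_nonneg (Complex.normSq_pos.2 hb) (Complex.normSq_nonneg a)
  have hd : Complex.normSq b + Complex.normSq a ≠ 0 := hpos.ne'
  have h1 : 1 + Complex.normSq (a / b) ≠ 0 :=
    (add_pos_of_pos_of_nonneg one_pos (Complex.normSq_nonneg _)).ne'
  funext i
  fin_cases i
  · show 2 * (a / b).re / (1 + Complex.normSq (a / b)) =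
      2 * (a * (starRingEnd ℂ) b).re / (Complex.normSq b + Complex.normSq a)
    rw [div_eq_div_iff h1 hd, Complex.div_re, Complex.normSq_div, Complex.mul_re,
      Complex.conj_re, Complex.conj_im]
    field_simp
    try ring
    try exact Or.inl trivial
  · show 2 * (a / b).im / (1 + Complex.normSq (a / b)) =
      2 * (a * (starRingEnd ℂ) b).im / (Complex.normSq b + Complex.normSq a)
    rw [div_eq_div_iff h1 hd, Complex.div_im, Complex.normSq_div, Complex.mul_im,
      Complex.conj_re, Complex.conj_im]
    field_simp
    try ring
    try exact Or.inl trivial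
  · show (1 - Complex.normSq (a / b)) / (1 + Complex.normSq (a / b)) =
      (Complex.normSq b - Complex.normSq a) / (Complex.normSq b + Complex.normSq a)
    rw [div_eq_div_iff h1 hd, Complex.normSq_div]
    field_simp
    try ring
    try exact Or.inl trivial

/-- For any point `(η₁, η₂)` of the standard disk `D_{(λ,0)}`, the sum
`S = π(η₁) + π(1/conj(η₂))` lies on the plane `2(Re λ)x₁ + 2(Im λ)x₂ + (1−|λ|²)x₃ = 0`:
the great circle of `λ` consists of points equidistant from `π(η₁)` and `π(τ(η₂))`. -/
theorem great_circle_equidistant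
    (lam z : ℂ) (hz : ‖z‖ ≤ 1)
    (h1 : 1 - (starRingEnd ℂ) lam * z ≠ 0)
    (h2 : (starRingEnd ℂ) lam * z + 1 ≠ 0)
    (h3 : z ≠ lam) :
    let η₁ := (z + lam) / (1 - (starRingEnd ℂ) lam * z)
    let η₂ := (z - lam) / ((starRingEnd ℂ) lam * z + 1)
    let S := stereo η₁ + stereo (1 / (starRingEnd ℂ) η₂)
    2 * lam.re * S 0 + 2 * lam.im * S 1 + (1 - Complex.normSq lam) * S 2 = 0 := by
  intro η₁ η₂ S
  have hzl : z - lam ≠ 0 := sub_ne_zero.2 h3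
  have hczl : (starRingEnd ℂ) (z - lam) ≠ 0 := by
    rwa [ne_eq, map_eq_zero]
  have htau : 1 / (starRingEnd ℂ) η₂ =
      (starRingEnd ℂ) ((starRingEnd ℂ) lam * z + 1) / (starRingEnd ℂ) (z - lam) := by
    show 1 / (starRingEnd ℂ) ((z - lam) / ((starRingEnd ℂ) lam * z + 1)) = _
    rw [map_div₀, one_div, inv_div]
  -- key denominator identities
  have hK1 : Complex.normSq (1 - (starRingEnd ℂ) lam * z) + Complex.normSq (z + lam)
      = (1 + Complex.normSq lam) * (1 + Complex.normSq z) := by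
    simp only [Complex.normSq_apply, Complex.sub_re, Complex.sub_im, Complex.add_re,
      Complex.add_im, Complex.mul_re, Complex.mul_im, Complex.one_re, Complex.one_im,
      Complex.conj_re, Complex.conj_im]
    ring
  have hK2 : Complex.normSq ((starRingEnd ℂ) (z - lam))
      + Complex.normSq ((starRingEnd ℂ) ((starRingEnd ℂ) lam * z + 1))
      = (1 + Complex.normSq lam) * (1 + Complex.normSq z) := by
    simp only [Complex.normSq_conj, Complex.normSq_apply, Complex.sub_re, Complex.sub_im,
      Complex.add_re, Complex.add_im, Complex.mul_re, Complex.mul_im, Complex.one_re,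
      Complex.one_im, Complex.conj_re, Complex.conj_im]
    ring
  have hKpos : (0:ℝ) < (1 + Complex.normSq lam) * (1 + Complex.normSq z) :=
    mul_pos (add_pos_of_pos_of_nonneg one_pos (Complex.normSq_nonneg _))
      (add_pos_of_pos_of_nonneg one_pos (Complex.normSq_nonneg _))
  have hS : ∀ i, S i = stereo η₁ i + stereo (1 / (starRingEnd ℂ) η₂) i := fun i => rfl
  have hη₁ : η₁ = (z + lam) / (1 - (starRingEnd ℂ) lam * z) := rfl
  rw [hS 0, hS 1, hS 2, htau, hη₁, stereo_div _ _ h1, stereo_div _ _ hczl]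
  simp only [Matrix.cons_val_zero, Matrix.cons_val_one, Matrix.head_cons,
    Matrix.cons_val_two, Matrix.tail_cons]
  rw [hK1, hK2]
  rw [← add_div, ← add_div, ← add_div]
  field_simp
  simp only [Complex.mul_re, Complex.mul_im, Complex.sub_re, Complex.sub_im, Complex.add_re,
    Complex.add_im, Complex.one_re, Complex.one_im, Complex.conj_re, Complex.conj_im,
    Complex.normSq_apply, Complex.normSq_conj]
  ring
end

section
/- For every pair of distinct points p, q ∈ ℂ, the set 𝔠_{p,q} = {(A,B,C) ∈ ℝ×ℂ×ℝ : |B|² − AC = 1, A|p|² − B·conj(p) − conj(B)·p + C = 0, and A|q|² − B·conj(q) − conj(B)·q + C = 0} is homeomorphic to the circle S¹ = {z ∈ ℂ : |z| = 1}. (In the standard model, 𝔠_{p,q} is the space-like geodesic of oriented circles through the two points p and q, and it is closed.) -/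
set_option maxHeartbeats 1000000


/-- For distinct `p, q ∈ ℂ`, the set of oriented circles through both `p`
and `q`, that is `𝔠_{p,q} = {(A,B,C) : |B|² − AC = 1` and the circle equation holds at
`p` and at `q}`, is homeomorphic to the circle `S¹` (a closed space-like geodesic). -/
theorem spacelike_geodesic_homeo_circle (p q : ℂ) (hpq : p ≠ q) :
    Nonempty
      (↥{x : ℝ × ℂ × ℝ |
          Complex.normSq x.2.1 - x.1 * x.2.2 = 1 ∧
          (x.1 : ℂ) * (Complex.normSq p : ℝ) - x.2.1 * (starRingEnd ℂ) p
            - (starRingEnd ℂ) x.2.1 * p + (x.2.2 : ℂ) = 0 ∧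
          (x.1 : ℂ) * (Complex.normSq q : ℝ) - x.2.1 * (starRingEnd ℂ) q
            - (starRingEnd ℂ) x.2.1 * q + (x.2.2 : ℂ) = 0}
        ≃ₜ ↥{z : ℂ | ‖z‖ = 1}) := by
  obtain ⟨d, hd0, hd2⟩ : ∃ d : ℝ, d ≠ 0 ∧
      d ^ 2 = (p.re - q.re) ^ 2 + (p.im - q.im) ^ 2 := by
    refine ⟨‖p - q‖, ?_, ?_⟩
    · simpa [sub_eq_zero] using hpq
    · rw [Complex.sq_norm, Complex.normSq_apply]
      simp [Complex.sub_re, Complex.sub_im]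
      ring
  let F : ℂ → ℝ × ℂ × ℝ := fun z =>
    (2 * z.re / d,
     ((z.re / d : ℝ) : ℂ) * (p + q) + ((z.im / d : ℝ) : ℂ) * Complex.I * (p - q),
     (2 * z.re * (p * (starRingEnd ℂ) q).re + 2 * z.im * ((starRingEnd ℂ) p * q).im) / d)
  let G : ℝ × ℂ × ℝ → ℂ := fun x =>
    (((((x.2.1 * ((starRingEnd ℂ) p + (starRingEnd ℂ) q)).re
        - x.1 * (p * (starRingEnd ℂ) q).re - x.2.2) / d : ℝ)) : ℂ)
    + ((((x.2.1 * ((starRingEnd ℂ) p - (starRingEnd ℂ) q)).im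
        - x.1 * ((starRingEnd ℂ) p * q).im) / d : ℝ) : ℂ) * Complex.I
  -- Q(F z) = normSq z, identically
  have hQ : ∀ z : ℂ, Complex.normSq (F z).2.1 - (F z).1 * (F z).2.2 = Complex.normSq z := by
    intro z
    simp only [F, Complex.normSq_apply, Complex.add_re, Complex.add_im, Complex.mul_re,
      Complex.mul_im, Complex.ofReal_re, Complex.ofReal_im, Complex.I_re, Complex.I_im,
      Complex.sub_re, Complex.sub_im, Complex.conj_re, Complex.conj_im]
    field_simp
    linear_combination (-(z.re * z.re + z.im * z.im)) * hd2
  -- F z satisfies the circle equation at p and at q, identically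
  have hcp : ∀ z : ℂ,
      ((F z).1 : ℂ) * (Complex.normSq p : ℝ) - (F z).2.1 * (starRingEnd ℂ) p
        - (starRingEnd ℂ) (F z).2.1 * p + ((F z).2.2 : ℂ) = 0 := by
    intro z
    simp only [F, Complex.ext_iff, Complex.normSq_apply, Complex.add_re, Complex.add_im,
      Complex.mul_re, Complex.mul_im, Complex.sub_re, Complex.sub_im, Complex.ofReal_re,
      Complex.ofReal_im, Complex.I_re, Complex.I_im, Complex.conj_re, Complex.conj_im,
      Complex.zero_re, Complex.zero_im]
    constructor <;> (field_simp; ring)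
  have hcq : ∀ z : ℂ,
      ((F z).1 : ℂ) * (Complex.normSq q : ℝ) - (F z).2.1 * (starRingEnd ℂ) q
        - (starRingEnd ℂ) (F z).2.1 * q + ((F z).2.2 : ℂ) = 0 := by
    intro z
    simp only [F, Complex.ext_iff, Complex.normSq_apply, Complex.add_re, Complex.add_im,
      Complex.mul_re, Complex.mul_im, Complex.sub_re, Complex.sub_im, Complex.ofReal_re,
      Complex.ofReal_im, Complex.I_re, Complex.I_im, Complex.conj_re, Complex.conj_im,
      Complex.zero_re, Complex.zero_im]
    constructor <;> (field_simp; ring)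
  -- G ∘ F = id
  have hGF : ∀ z : ℂ, G (F z) = z := by
    intro z
    simp only [F, G, Complex.ext_iff, Complex.add_re, Complex.add_im, Complex.mul_re,
      Complex.mul_im, Complex.sub_re, Complex.sub_im, Complex.ofReal_re, Complex.ofReal_im,
      Complex.I_re, Complex.I_im, Complex.conj_re, Complex.conj_im]
    constructor
    · field_simp
      linear_combination (-z.re) * hd2
    · field_simp
      linear_combination (-z.im) * hd2
  -- F ∘ G = id on the solution set of the two linear equations
  have hFG : ∀ x : ℝ × ℂ × ℝ,
      ((x.1 : ℂ) * (Complex.normSq p : ℝ) - x.2.1 * (starRingEnd ℂ) p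
        - (starRingEnd ℂ) x.2.1 * p + (x.2.2 : ℂ) = 0) →
      ((x.1 : ℂ) * (Complex.normSq q : ℝ) - x.2.1 * (starRingEnd ℂ) q
        - (starRingEnd ℂ) x.2.1 * q + (x.2.2 : ℂ) = 0) →
      F (G x) = x := by
    rintro ⟨A, B, C⟩ h2 h3
    rw [Complex.ext_iff] at h2 h3
    simp only [Complex.normSq_apply, Complex.mul_re, Complex.mul_im, Complex.sub_re,
      Complex.sub_im, Complex.add_re, Complex.add_im, Complex.ofReal_re, Complex.ofReal_im,
      Complex.conj_re, Complex.conj_im, Complex.zero_re, Complex.zero_im] at h2 h3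
    obtain ⟨h2r, h2i⟩ := h2
    obtain ⟨h3r, h3i⟩ := h3
    refine Prod.ext ?_ (Prod.ext ?_ ?_)
    · show 2 * (G (A, B, C)).re / d = A
      simp only [G, Complex.add_re, Complex.mul_re, Complex.ofReal_re, Complex.ofReal_im,
        Complex.I_re, Complex.I_im, Complex.conj_re, Complex.conj_im, Complex.add_im,
        Complex.sub_re, Complex.sub_im]
      field_simp
      linear_combination -h2r - h3r - A * hd2
    · show (_ : ℂ) = B
      rw [Complex.ext_iff]
      constructor
      · simp only [G, F, Complex.add_re, Complex.add_im, Complex.mul_re, Complex.mul_im,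
          Complex.sub_re, Complex.sub_im, Complex.ofReal_re, Complex.ofReal_im,
          Complex.I_re, Complex.I_im, Complex.conj_re, Complex.conj_im]
        field_simp
        linear_combination -q.re * h2r - p.re * h3r - B.re * hd2
      · simp only [G, F, Complex.add_re, Complex.add_im, Complex.mul_re, Complex.mul_im,
          Complex.sub_re, Complex.sub_im, Complex.ofReal_re, Complex.ofReal_im,
          Complex.I_re, Complex.I_im, Complex.conj_re, Complex.conj_im]
        field_simp
        linear_combination -q.im * h2r - p.im * h3r - B.im * hd2
    · show (_ : ℝ) = C
      simp only [G, F, Complex.add_re, Complex.add_im, Complex.mul_re, Complex.mul_im,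
        Complex.sub_re, Complex.sub_im, Complex.ofReal_re, Complex.ofReal_im,
        Complex.I_re, Complex.I_im, Complex.conj_re, Complex.conj_im]
      field_simp
      linear_combination -(q.re^2 + q.im^2) * h2r - (p.re^2 + p.im^2) * h3r - C * hd2
  have hFmem : ∀ z : ℂ, ‖z‖ = 1 →
      Complex.normSq (F z).2.1 - (F z).1 * (F z).2.2 = 1 ∧
      ((F z).1 : ℂ) * (Complex.normSq p : ℝ) - (F z).2.1 * (starRingEnd ℂ) p
        - (starRingEnd ℂ) (F z).2.1 * p + ((F z).2.2 : ℂ) = 0 ∧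
      ((F z).1 : ℂ) * (Complex.normSq q : ℝ) - (F z).2.1 * (starRingEnd ℂ) q
        - (starRingEnd ℂ) (F z).2.1 * q + ((F z).2.2 : ℂ) = 0 := by
    intro z hz
    refine ⟨?_, hcp z, hcq z⟩
    rw [hQ z, ← Complex.sq_norm, hz, one_pow]
  have hGc : Continuous G := by fun_prop
  have hFc : Continuous F := by fun_prop
  refine ⟨Homeomorph.mk (Equiv.mk
      (fun x => ⟨G x.1, ?_⟩) (fun z => ⟨F z.1, hFmem z.1 z.2⟩) ?_ ?_) ?_ ?_⟩
  · obtain ⟨h1, h2, h3⟩ := x.2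
    have h4 := hQ (G x.1)
    rw [hFG x.1 h2 h3] at h4
    show ‖G x.1‖ = 1
    rw [Complex.norm_def, ← h4, h1, Real.sqrt_one]
  · intro x
    exact Subtype.ext (hFG x.1 x.2.2.1 x.2.2.2)
  · intro z
    exact Subtype.ext (hGF z.1)
  · exact (hGc.comp continuous_subtype_val).subtype_mk _
  · exact (hFc.comp continuous_subtype_val).subtype_mk _
end

section
/- Let n ≥ 1 and let G, G' : ℝⁿ → ℝⁿ be maps each of whose components is a quadratic form (a homogeneous polynomial of degree 2) on ℝⁿ. Suppose f : ℝⁿ → ℝ is a function such that G(y) − G'(y) = f(y)·y for all y ∈ ℝⁿ. Then there exists a linear form l : ℝⁿ → ℝ with G(y) − G'(y) = l(y)·y for all y ∈ ℝⁿ, and f(y) = l(y) for all y ≠ 0. -/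
private lemma quad_coeff_aux (a b c a' b' c' : ℝ)
    (h : ∀ t : ℝ, a + b * t + c * t ^ 2 = a' + b' * t + c' * t ^ 2) :
    a = a' ∧ b = b' ∧ c = c' := by
  have h0 := h 0
  have h1 := h 1
  have h2 := h (-1)
  norm_num at h0 h1 h2
  refine ⟨by linarith, by linarith, by linarith⟩

private lemma curve_aux (n : ℕ) (Q : QuadraticForm ℝ (Fin n → ℝ)) (y v : Fin n → ℝ) (t : ℝ) :
    Q (y + t • v) = Q y + QuadraticMap.polar Q y v * t + Q v * t ^ 2 := by
  have h1 : Q (y + t • v) = Q y + Q (t • v) + QuadraticMap.polar Q y (t • v) := by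
    simp [QuadraticMap.polar]; try ring
  rw [h1, QuadraticMap.polar_smul_right, QuadraticMap.map_smul]
  simp only [smul_eq_mul]
  try ring

/-- If `G, G' : ℝⁿ → ℝⁿ` have components that are quadratic forms on ℝⁿ and
`G(y) − G'(y) = f(y)·y` for some function `f`, then there is a linear form `l` with
`G(y) − G'(y) = l(y)·y` for all `y`, and `f(y) = l(y)` for all `y ≠ 0`. -/
theorem quadratic_difference_multiple_of_euler
    (n : ℕ) (hn : 1 ≤ n)
    (G G' : (Fin n → ℝ) → Fin n → ℝ)
    (hG : ∀ i : Fin n, ∃ Q : QuadraticForm ℝ (Fin n → ℝ), ∀ y, G y i = Q y)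
    (hG' : ∀ i : Fin n, ∃ Q : QuadraticForm ℝ (Fin n → ℝ), ∀ y, G' y i = Q y)
    (f : (Fin n → ℝ) → ℝ)
    (hf : ∀ y : Fin n → ℝ, G y - G' y = f y • y) :
    ∃ l : (Fin n → ℝ) →ₗ[ℝ] ℝ,
      (∀ y : Fin n → ℝ, G y - G' y = l y • y) ∧
      ∀ y : Fin n → ℝ, y ≠ 0 → f y = l y := by
  classical
  choose Q hQ using hG
  choose Q' hQ' using hG'
  set e : Fin n → (Fin n → ℝ) := fun j => Pi.single j 1 with he
  set S : Fin n → QuadraticForm ℝ (Fin n → ℝ) := fun k => Q k - Q' k with hSdef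
  have hS : ∀ k y, S k y = f y * y k := by
    intro k y
    have h := congrFun (hf y) k
    simp only [Pi.sub_apply, Pi.smul_apply, smul_eq_mul] at h
    simp only [hSdef, QuadraticMap.sub_apply, ← hQ, ← hQ', h]
  set c : Fin n → ℝ := fun j => S j (e j) with hc
  have hek : ∀ j, e j j = 1 := fun j => Pi.single_eq_same j 1
  have hene : ∀ j k : Fin n, k ≠ j → e j k = 0 := fun j k h => Pi.single_eq_of_ne h 1
  have hS0 : ∀ k j, k ≠ j → S k (e j) = 0 := by
    intro k j h
    rw [hS, hene j k h, mul_zero]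
  -- main polarization computation
  have hA : ∀ (y : Fin n → ℝ) (j k : Fin n), j ≠ k →
      QuadraticMap.polar (S k) y (e j) = y k * c j ∧
      y k * QuadraticMap.polar (S j) y (e j) = f y * y k + y j * (y k * c j) := by
    intro y j k hjk
    have hz : ∀ t : ℝ, (y j + t) * S k (y + t • e j) = y k * S j (y + t • e j) := by
      intro t
      rw [hS, hS]
      have h1 : (y + t • e j) k = y k := by
        simp [hene j k (Ne.symm hjk)]
      have h2 : (y + t • e j) j = y j + t := by
        simp [hek]
      rw [h1, h2]; ring
    have key : ∀ t : ℝ,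
        y j * S k y + (S k y + y j * QuadraticMap.polar (S k) y (e j)) * t
          + QuadraticMap.polar (S k) y (e j) * t ^ 2
        = y k * S j y + (y k * QuadraticMap.polar (S j) y (e j)) * t
          + (y k * c j) * t ^ 2 := by
      intro t
      have h := hz t
      rw [curve_aux, curve_aux, hS0 k j (Ne.symm hjk)] at h
      have hcj : S j (e j) = c j := rfl
      rw [hcj] at h
      linear_combination h
    obtain ⟨h1, h2, h3⟩ := quad_coeff_aux _ _ _ _ _ _ key
    refine ⟨h3, ?_⟩
    rw [← h2, hS, h3]
  -- the linear form
  let l : (Fin n → ℝ) →ₗ[ℝ] ℝ :=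
    { toFun := fun y => ∑ j, c j * y j
      map_add' := by
        intro a b
        simp [Pi.add_apply, mul_add, Finset.sum_add_distrib]
      map_smul' := by
        intro r a
        simp only [Pi.smul_apply, smul_eq_mul, RingHom.id_apply]
        rw [Finset.mul_sum]
        exact Finset.sum_congr rfl fun j _ => by ring }
  have hl : ∀ y, l y = ∑ j, c j * y j := fun y => rfl
  have hfl : ∀ y : Fin n → ℝ, y ≠ 0 → f y = ∑ j, c j * y j := by
    intro y hy
    obtain ⟨k, hk⟩ : ∃ k, y k ≠ 0 := by
      by_contra h
      push_neg at h
      exact hy (funext h)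
    by_cases hsingle : ∀ m, m ≠ k → y m = 0
    · -- y is supported on coordinate k
      have hy' : y = y k • e k := by
        funext m
        by_cases hm : m = k
        · subst hm; simp [hek]
        · simp [hene k m hm, hsingle m hm]
      have h2 : S k y = y k * y k * c k := by
        conv_lhs => rw [hy']
        rw [QuadraticMap.map_smul]
        simp [smul_eq_mul, hc]
      have h3 : f y * y k = y k * y k * c k := by rw [← hS, h2]
      have h4 : f y = y k * c k := by
        field_simp at h3 ⊢
        calc f y = (f y * y k) / y k := by field_simp
          _ = (y k * y k * c k) / y k := by rw [h3]; ring
          _ = y k * c k := by field_simp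
      rw [h4, Finset.sum_eq_single k]
      · ring
      · intro m _ hm; rw [hsingle m hm]; ring
      · intro h; exact absurd (Finset.mem_univ k) h
    · push_neg at hsingle
      obtain ⟨m, hmk, hm⟩ := hsingle
      -- polar (S k) y (e k) = f y + y k * c k
      have hAkk : QuadraticMap.polar (S k) y (e k) = f y + y k * c k := by
        have h := (hA y k m (Ne.symm hmk)).2
        have h' : y m * QuadraticMap.polar (⇑(S k)) y (e k) = y m * (f y + y k * c k) := by
          linear_combination h
        exact mul_left_cancel₀ hm h'
      have hAkj : ∀ j, j ≠ k → QuadraticMap.polar (S k) y (e j) = y k * c j :=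
        fun j hj => (hA y j k hj).1
      -- expand polar (S k) y y
      have hy_sum : y = ∑ j, y j • e j := by
        have : ∀ j, y j • e j = Pi.single j (y j) := by
          intro j
          rw [he]
          ext m
          by_cases hjm : m = j
          · subst hjm; simp
          · simp [Pi.single_eq_of_ne hjm]
        simp_rw [this]
        exact (Finset.univ_sum_single y).symm
      have hexp : QuadraticMap.polar (⇑(S k)) y y
          = ∑ j, y j * QuadraticMap.polar (⇑(S k)) y (e j) := by
        nth_rewrite 2 [hy_sum]
        rw [← QuadraticMap.polarBilin_apply_apply, map_sum]
        simp [QuadraticMap.polarBilin_apply_apply, smul_eq_mul]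
      have hps : QuadraticMap.polar (S k) y y = 2 * S k y := by
        rw [QuadraticMap.polar_self]
        simp [smul_eq_mul]
      have e2 : ∑ j ∈ Finset.univ.erase k, y j * QuadraticMap.polar (⇑(S k)) y (e j)
          = ∑ j ∈ Finset.univ.erase k, y k * (c j * y j) :=
        Finset.sum_congr rfl fun j hj => by rw [hAkj j (Finset.ne_of_mem_erase hj)]; ring
      have hsum : ∑ j, y j * QuadraticMap.polar (⇑(S k)) y (e j)
          = y k * f y + y k * ∑ j, c j * y j := by
        rw [← Finset.sum_erase_add _ _ (Finset.mem_univ k), e2, hAkk,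
          ← Finset.sum_erase_add _ (fun j => c j * y j) (Finset.mem_univ k),
          mul_add, mul_add, Finset.mul_sum]
        ring
      have hmain : 2 * (f y * y k) = y k * f y + y k * ∑ j, c j * y j := by
        rw [← hS, ← hps, hexp, hsum]
      have : y k * f y = y k * ∑ j, c j * y j := by linarith
      exact mul_left_cancel₀ hk this
  refine ⟨l, ?_, ?_⟩
  · intro y
    rcases eq_or_ne y 0 with rfl | hy
    · rw [hf]; simp
    · rw [hf, hfl y hy, hl]
  · intro y hy
    rw [hfl y hy, hl]
end
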